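/- Let $V_1 \subseteq \mathbb{F}[\mathbf{y}]$ and $V_2 \subseteq \mathbb{F}[\mathbf{z}]$ be vector spaces of polynomials over disjoint variable sets, with BIWAs $\mathrm{wt}_1: \mathbf{y} \to \mathbb{N}^k$ and $\mathrm{wt}_2: \mathbf{z} \to \mathbb{N}^k$ isolating monomial bases $B_1$ and $B_2$ respectively. Suppose $w: \mathbf{y} \cup \mathbf{z} \to \mathbb{N}$ is a weight assignment that gives distinct weights to all monomials in $B_1 \cdot B_2 = \{m_1 m_2 : m_1 \in B_1, m_2 \in B_2\}$. Then the weight assignment $\mathrm{wt}(x) = (\mathrm{wt}_i(x), w(x)) \in \mathbb{N}^{k+1}$ (where $i$ is 1 or 2 according to whether $x \in \mathbf{y}$ or $x \in \mathbf{z}$) is a BIWA for $V = \mathrm{span}\{f \cdot g : f \in V_1, g \in V_2\}$, isolating the basis $B_1 \cdot B_2$. -/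

import Mathlib

/-- Lexicographic order on weight tuples in `ℕ^k`. -/
def LexLt {k : ℕ} (a b : Fin k → ℕ) : Prop :=
  ∃ i : Fin k, (∀ j : Fin k, j < i → a j = b j) ∧ a i < b i

/-- The column of the space `V` of polynomials indexed by monomial `m`. -/
def col {F Mon : Type*} [Field F] (V : Submodule F (Mon → F)) (m : Mon) :
    V →ₗ[F] F :=
  (LinearMap.proj m).comp V.subtype

/-- `wt` is a basis isolating weight assignment for `V`, isolating the monomial basis `B`. -/
def IsBIWAOn {F Mon : Type*} [Field F] {k : ℕ}
    (wt : Mon → Fin k → ℕ) (V : Submodule F (Mon → F)) (B : Set Mon) : Prop :=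
  (∀ m₁ ∈ B, ∀ m₂ ∈ B, m₁ ≠ m₂ → wt m₁ ≠ wt m₂) ∧
  LinearIndependent F (fun m : B => col V (m : Mon)) ∧
  ∀ m : Mon, m ∉ B →
    col V m ∈ Submodule.span F (col V '' {m' | m' ∈ B ∧ LexLt (wt m') (wt m)})

/-- Additive extension of a weight assignment on variables to multilinear monomials. -/
def wtMon {V : Type*} {k : ℕ} (wt : V → Fin k → ℕ) (S : Finset V) : Fin k → ℕ :=
  ∑ x ∈ S, wt x

/-- Product of a polynomial over the `Y` variables and one over the `Z` variables:
a multilinear monomial over `Y ∪ Z` is identified with a pair of monomials. -/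
def mulPoly {F Y Z : Type*} [Field F] (f : Finset Y → F) (g : Finset Z → F) :
    Finset Y × Finset Z → F :=
  fun p => f p.1 * g p.2

/- ### Auxiliary lemmas -/

lemma LexLt.trans' {k : ℕ} {a b c : Fin k → ℕ} (h1 : LexLt a b) (h2 : LexLt b c) :
    LexLt a c := by
  obtain ⟨i, hi, hlt⟩ := h1
  obtain ⟨i', hi', hlt'⟩ := h2
  rcases lt_trichotomy i i' with h | h | h
  · exact ⟨i, fun j hj => (hi j hj).trans (hi' j (hj.trans h)), hlt.trans_le (hi' i h).le⟩
  · subst h; exact ⟨i, fun j hj => (hi j hj).trans (hi' j hj), hlt.trans hlt'⟩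
  · exact ⟨i', fun j hj => (hi j (hj.trans h)).trans (hi' j hj), (hi i' h) ▸ hlt'⟩

lemma LexLt.add_right {k : ℕ} {a b : Fin k → ℕ} (c : Fin k → ℕ) (h : LexLt a b) :
    LexLt (a + c) (b + c) := by
  obtain ⟨i, hi, hlt⟩ := h
  exact ⟨i, fun j hj => by simp [hi j hj], by simpa using Nat.add_lt_add_right hlt (c i)⟩

lemma LexLt.add_left {k : ℕ} {a b : Fin k → ℕ} (c : Fin k → ℕ) (h : LexLt a b) :
    LexLt (c + a) (c + b) := by
  obtain ⟨i, hi, hlt⟩ := h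
  exact ⟨i, fun j hj => by simp [hi j hj], by simpa using Nat.add_lt_add_left hlt (c i)⟩

lemma lexLt_add_of_lt_of_le {k : ℕ} {a b c d : Fin k → ℕ} (h1 : LexLt a b)
    (h2 : c = d ∨ LexLt c d) : LexLt (a + c) (b + d) := by
  rcases h2 with rfl | h2
  · exact h1.add_right c
  · exact (h1.add_right c).trans' (h2.add_left b)

lemma lexLt_add_of_le_of_lt {k : ℕ} {a b c d : Fin k → ℕ} (h1 : a = b ∨ LexLt a b)
    (h2 : LexLt c d) : LexLt (a + c) (b + d) := by
  rcases h1 with rfl | h1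
  · exact h2.add_left a
  · exact (h2.add_left a).trans' (h1.add_right d)

lemma LexLt.snoc {k : ℕ} {a b : Fin k → ℕ} (s t : ℕ) (h : LexLt a b) :
    LexLt (Fin.snoc a s) (Fin.snoc b t) := by
  obtain ⟨i, hi, hlt⟩ := h
  refine ⟨i.castSucc, ?_, by simpa using hlt⟩
  intro j hj
  have hji : (j : ℕ) < (i : ℕ) := hj
  have hjk : (j : ℕ) < k := hji.trans i.isLt
  have hje : j = (⟨(j : ℕ), hjk⟩ : Fin k).castSucc := by
    apply Fin.ext; simp
  rw [hje, Fin.snoc_castSucc, Fin.snoc_castSucc]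
  exact hi _ hji

lemma col_apply {F Mon : Type*} [Field F] (V : Submodule F (Mon → F)) (m : Mon) (v : V) :
    col V m v = (v : Mon → F) m := rfl

lemma li_finset {F ι M : Type*} [Field F] [AddCommGroup M] [Module F M] {v : ι → M}
    {B : Set ι} (h : LinearIndependent F (fun i : B => v i)) (t : Finset ι)
    (ht : ∀ i ∈ t, i ∈ B) (c : ι → F) (hc : ∑ i ∈ t, c i • v i = 0) :
    ∀ i ∈ t, c i = 0 := by
  classical
  intro i hi
  set e : {x // x ∈ t} ↪ B :=
    ⟨fun x => ⟨x.1, ht x.1 x.2⟩, fun x y hxy => by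
      apply Subtype.ext
      exact congrArg (fun z : B => z.1) hxy⟩ with he
  refine linearIndependent_iff'.mp h (t.attach.map e) (fun j => c j.1) ?_ ⟨i, ht i hi⟩ ?_
  · rw [Finset.sum_map]
    exact (Finset.sum_attach t (fun i => c i • v i)).trans hc
  · simp only [Finset.mem_map, Finset.mem_attach, he]
    exact ⟨⟨i, hi⟩, trivial, rfl⟩

/-- Linear identities among evaluations transfer from generators to the span. -/
lemma eval_eq_on_span {F Y Z : Type*} [Field F]
    (V₁ : Submodule F (Finset Y → F)) (V₂ : Submodule F (Finset Z → F))
    (P : Finset (Finset Y × Finset Z)) (d : Finset Y × Finset Z → F)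
    (m : Finset Y × Finset Z)
    (hd : ∀ f ∈ V₁, ∀ g ∈ V₂, f m.1 * g m.2 = ∑ p ∈ P, d p * (f p.1 * g p.2))
    {h : Finset Y × Finset Z → F}
    (hh : h ∈ Submodule.span F {h | ∃ f ∈ V₁, ∃ g ∈ V₂, h = mulPoly f g}) :
    h m = ∑ p ∈ P, d p * h p := by
  induction hh using Submodule.span_induction with
  | mem x hx =>
    obtain ⟨f, hf, g, hg, rfl⟩ := hx
    exact hd f hf g hg
  | zero => simp
  | add x y _ _ hx hy =>
    simp only [Pi.add_apply, mul_add, Finset.sum_add_distrib, hx, hy]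
  | smul a x _ hx =>
    simp only [Pi.smul_apply, smul_eq_mul, mul_left_comm, ← Finset.mul_sum, hx]

/-- Expand a column as a finitely supported combination of basis columns. -/
lemma expand_col {F Mon : Type*} [Field F] {k : ℕ} {wt : Mon → Fin k → ℕ}
    {V : Submodule F (Mon → F)} {B : Set Mon} (h : IsBIWAOn wt V B) (m : Mon) :
    ∃ l : Mon →₀ F, (∀ m' ∈ l.support, m' ∈ B) ∧
      (∀ m' ∈ l.support, LexLt (wt m') (wt m) ∨ m' = m) ∧
      (m ∉ B → ∀ m' ∈ l.support, LexLt (wt m') (wt m)) ∧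
      Finsupp.linearCombination F (col V) l = col V m := by
  by_cases hmB : m ∈ B
  · refine ⟨Finsupp.single m 1, ?_, ?_, fun hc => absurd hmB hc, ?_⟩
    · intro m' hm'
      rw [Finsupp.support_single_ne_zero m one_ne_zero, Finset.mem_singleton] at hm'
      exact hm' ▸ hmB
    · intro m' hm'
      rw [Finsupp.support_single_ne_zero m one_ne_zero, Finset.mem_singleton] at hm'
      exact Or.inr hm'
    · simp [Finsupp.linearCombination_single]
  · obtain ⟨l, hl, hl2⟩ :=
      (Finsupp.mem_span_image_iff_linearCombination F).mp (h.2.2 m hmB)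
    rw [Finsupp.mem_supported] at hl
    refine ⟨l, fun m' hm' => (hl hm').1, fun m' hm' => Or.inl (hl hm').2,
      fun _ m' hm' => (hl hm').2, hl2⟩

/-- a BIWA for a product of spaces of polynomials over disjoint variable
sets, obtained by appending a coordinate separating the product basis `B₁ ⋅ B₂`. -/
theorem biwa_of_products {F Y Z : Type*} [Field F] {k : ℕ}
    (V₁ : Submodule F (Finset Y → F)) (V₂ : Submodule F (Finset Z → F))
    (wt₁ : Y → Fin k → ℕ) (wt₂ : Z → Fin k → ℕ)
    (B₁ : Set (Finset Y)) (B₂ : Set (Finset Z))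
    (h₁ : IsBIWAOn (wtMon wt₁) V₁ B₁) (h₂ : IsBIWAOn (wtMon wt₂) V₂ B₂)
    (w : Y ⊕ Z → ℕ)
    (hsep : ∀ p q : Finset Y × Finset Z, p.1 ∈ B₁ → p.2 ∈ B₂ → q.1 ∈ B₁ → q.2 ∈ B₂ →
      p ≠ q →
      ((∑ x ∈ p.1, w (Sum.inl x)) + ∑ x ∈ p.2, w (Sum.inr x)) ≠
      ((∑ x ∈ q.1, w (Sum.inl x)) + ∑ x ∈ q.2, w (Sum.inr x))) :
    IsBIWAOn
      (fun p : Finset Y × Finset Z =>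
        Fin.snoc (wtMon wt₁ p.1 + wtMon wt₂ p.2)
          ((∑ x ∈ p.1, w (Sum.inl x)) + ∑ x ∈ p.2, w (Sum.inr x)))
      (Submodule.span F {h : Finset Y × Finset Z → F | ∃ f ∈ V₁, ∃ g ∈ V₂, h = mulPoly f g})
      {p : Finset Y × Finset Z | p.1 ∈ B₁ ∧ p.2 ∈ B₂} := by
  classical
  set V : Submodule F (Finset Y × Finset Z → F) :=
    Submodule.span F {h : Finset Y × Finset Z → F | ∃ f ∈ V₁, ∃ g ∈ V₂, h = mulPoly f g}
    with hVdef
  refine ⟨?_, ?_, ?_⟩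
  -- Part 1: distinct weights on the basis
  · intro p hp q hq hne heq
    exact hsep p q hp.1 hp.2 hq.1 hq.2 hne (by simpa using congrFun heq (Fin.last k))
  -- Part 2: linear independence of basis columns
  · rw [linearIndependent_iff']
    intro s g H i₀ hi₀
    have Hval : ∀ f ∈ V₁, ∀ g' ∈ V₂, ∑ i ∈ s, g i * (f i.1.1 * g' i.1.2) = 0 := by
      intro f hf g' hg'
      have hmem : mulPoly f g' ∈ V :=
        Submodule.subset_span ⟨f, hf, g', hg', rfl⟩
      have := congrArg (fun φ : V →ₗ[F] F => φ ⟨mulPoly f g', hmem⟩) H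
      simpa [col_apply, mulPoly] using this
    set t₂ : Finset (Finset Z) := s.image (fun i => i.1.2) with ht₂
    have hfib : ∀ f ∈ V₁, ∀ m ∈ t₂,
        (∑ i ∈ s.filter (fun i => i.1.2 = m), g i * f i.1.1) = 0 := by
      intro f hf
      refine li_finset h₂.2.1 t₂ ?_ _ ?_
      · intro m hm
        obtain ⟨i, his, rfl⟩ := Finset.mem_image.mp hm
        exact i.2.2
      · apply LinearMap.ext
        intro v
        rw [LinearMap.sum_apply, LinearMap.zero_apply]
        have step : ∀ m ∈ t₂,
            ((∑ i ∈ s.filter (fun i => i.1.2 = m), g i * f i.1.1) • col V₂ m) v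
            = ∑ i ∈ s.filter (fun i => i.1.2 = m),
                g i * (f i.1.1 * (v : Finset Z → F) i.1.2) := by
          intro m hm
          rw [LinearMap.smul_apply, col_apply, smul_eq_mul, Finset.sum_mul]
          refine Finset.sum_congr rfl fun i hi => ?_
          rw [(Finset.mem_filter.mp hi).2]; ring
        rw [Finset.sum_congr rfl step,
          Finset.sum_fiberwise_of_maps_to (fun i hi => Finset.mem_image_of_mem _ hi)]
        exact Hval f hf v.1 v.2
    set s₂ := s.filter (fun i => i.1.2 = i₀.1.2) with hs₂
    have hm₂ : i₀.1.2 ∈ t₂ := Finset.mem_image_of_mem _ hi₀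
    have hΦ : ∀ f ∈ V₁, ∑ i ∈ s₂, g i * f i.1.1 = 0 := fun f hf => hfib f hf _ hm₂
    set t₁ := s₂.image (fun i => i.1.1) with ht₁
    have hc1 : ∀ m ∈ t₁, (∑ i ∈ s₂.filter (fun i => i.1.1 = m), g i) = 0 := by
      refine li_finset h₁.2.1 t₁ ?_ _ ?_
      · intro m hm
        obtain ⟨i, his, rfl⟩ := Finset.mem_image.mp hm
        exact i.2.1
      · apply LinearMap.ext
        intro v
        rw [LinearMap.sum_apply, LinearMap.zero_apply]
        have step : ∀ m ∈ t₁,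
            ((∑ i ∈ s₂.filter (fun i => i.1.1 = m), g i) • col V₁ m) v
            = ∑ i ∈ s₂.filter (fun i => i.1.1 = m), g i * (v : Finset Y → F) i.1.1 := by
          intro m hm
          rw [LinearMap.smul_apply, col_apply, smul_eq_mul, Finset.sum_mul]
          refine Finset.sum_congr rfl fun i hi => ?_
          rw [(Finset.mem_filter.mp hi).2]
        rw [Finset.sum_congr rfl step,
          Finset.sum_fiberwise_of_maps_to (fun i hi => Finset.mem_image_of_mem _ hi)]
        exact hΦ v.1 v.2
    have hm₁ : i₀.1.1 ∈ t₁ :=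
      Finset.mem_image_of_mem _ (Finset.mem_filter.mpr ⟨hi₀, rfl⟩)
    have hsing : s₂.filter (fun i => i.1.1 = i₀.1.1) = {i₀} := by
      ext j
      simp only [hs₂, Finset.mem_filter, Finset.mem_singleton]
      constructor
      · rintro ⟨⟨hjs, hj2⟩, hj1⟩
        exact Subtype.ext (Prod.ext hj1 hj2)
      · rintro rfl
        exact ⟨⟨hi₀, rfl⟩, rfl⟩
    have := hc1 i₀.1.1 hm₁
    rwa [hsing, Finset.sum_singleton] at this
  -- Part 3: columns outside the basis lie in the span of smaller-weight basis columns
  · intro m hm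
    obtain ⟨l₁, hl₁B, hl₁le, hl₁lt, hl₁tot⟩ := expand_col h₁ m.1
    obtain ⟨l₂, hl₂B, hl₂le, hl₂lt, hl₂tot⟩ := expand_col h₂ m.2
    have e₁ : ∀ f ∈ V₁, f m.1 = ∑ a ∈ l₁.support, l₁ a * f a := by
      intro f hf
      have := congrArg (fun φ : V₁ →ₗ[F] F => φ ⟨f, hf⟩) hl₁tot
      simp only [Finsupp.linearCombination_apply, Finsupp.sum, LinearMap.sum_apply,
        LinearMap.smul_apply, col_apply, smul_eq_mul] at this
      exact this.symm
    have e₂ : ∀ g ∈ V₂, g m.2 = ∑ b ∈ l₂.support, l₂ b * g b := by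
      intro g hg
      have := congrArg (fun φ : V₂ →ₗ[F] F => φ ⟨g, hg⟩) hl₂tot
      simp only [Finsupp.linearCombination_apply, Finsupp.sum, LinearMap.sum_apply,
        LinearMap.smul_apply, col_apply, smul_eq_mul] at this
      exact this.symm
    set P := l₁.support ×ˢ l₂.support with hP
    set d : Finset Y × Finset Z → F := fun p => l₁ p.1 * l₂ p.2 with hd
    have key : col V m = ∑ p ∈ P, d p • col V p := by
      apply LinearMap.ext
      intro v
      have main := eval_eq_on_span V₁ V₂ P d m ?_ v.2
      · rw [col_apply, main, LinearMap.sum_apply]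
        exact Finset.sum_congr rfl fun p _ => by
          rw [LinearMap.smul_apply, col_apply, smul_eq_mul]
      · intro f hf g hg
        rw [e₁ f hf, e₂ g hg, Finset.sum_mul_sum, hP, Finset.sum_product]
        exact Finset.sum_congr rfl fun a _ => Finset.sum_congr rfl fun b _ => by
          rw [hd]; ring
    rw [key]
    refine Submodule.sum_mem _ fun p hp => Submodule.smul_mem _ _ (Submodule.subset_span ?_)
    obtain ⟨hp1, hp2⟩ := Finset.mem_product.mp hp
    refine ⟨p, ⟨⟨hl₁B _ hp1, hl₂B _ hp2⟩, ?_⟩, rfl⟩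
    apply LexLt.snoc
    by_cases hc : m.1 ∈ B₁
    · have hc2 : m.2 ∉ B₂ := fun h => hm ⟨hc, h⟩
      refine lexLt_add_of_le_of_lt ?_ (hl₂lt hc2 _ hp2)
      rcases hl₁le _ hp1 with h | h
      · exact Or.inr h
      · exact Or.inl (by rw [h])
    · refine lexLt_add_of_lt_of_le (hl₁lt hc _ hp1) ?_
      rcases hl₂le _ hp2 with h | h
      · exact Or.inr h
      · exact Or.inl (by rw [h])
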